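/- Let η, L, μ, N, B, L̄σ, ω̄, W, β > 0 with 2μ > β·ω̄·ηL²/N, and define δ := 2μ·(L̄σ + β·W) / (L̄σ·(2μ − β·ω̄·ηL²/N)). Then the DCSGD asymptotic level with batch size δ·B equals the DSGD level: [ηL·(L̄σ + β·W)/(2·δB·N)] / (2μ − ηL²·ω̄·β/N) = ηL·L̄σ/(4μNB). -/

import Mathlib

/-- Batch-size-versus-compression scaling rule of Proposition 3.7: with
`δ = 2μ(L̄σ + βW) / (L̄σ(2μ − βω̄ηL²/N))`, the DCSGD asymptotic level with batch
size `δB` equals the DSGD level `η L L̄σ / (4 μ N B)`. -/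
theorem dcsgd_scaling_rule_batch_vs_compression
    (η L μ N B Lσbar ωbar W β : ℝ)
    (hη : 0 < η) (hL : 0 < L) (hμ : 0 < μ) (hN : 0 < N) (hB : 0 < B)
    (hLσ : 0 < Lσbar) (hω : 0 < ωbar) (hW : 0 < W) (hβ : 0 < β)
    (hpos : β * ωbar * η * L ^ 2 / N < 2 * μ)
    (δ : ℝ)
    (hδ : δ = 2 * μ * (Lσbar + β * W)
        / (Lσbar * (2 * μ - β * ωbar * η * L ^ 2 / N))) :
    (η * L * (Lσbar + β * W) / (2 * (δ * B) * N))
        / (2 * μ - η * L ^ 2 * ωbar * β / N)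
      = η * L * Lσbar / (4 * μ * N * B) := by
  have hsub : 0 < 2 * μ - β * ωbar * η * L ^ 2 / N := by linarith
  have hsum : 0 < Lσbar + β * W := by positivity
  have h1 : (2 * μ - η * L ^ 2 * ωbar * β / N) = (2 * μ - β * ωbar * η * L ^ 2 / N) := by ring
  have hδ' : δ = 2 * μ * (Lσbar + β * W)
      / (Lσbar * (2 * μ - β * ωbar * η * L ^ 2 / N)) := hδ
  have hδpos : 0 < δ := by rw [hδ']; positivity
  have hmul : β * ωbar * η * L ^ 2 < 2 * μ * N := by
    have := (div_lt_iff₀ hN).mp hpos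
    linarith
  have hmul' : 0 < 2 * μ * N - β * ωbar * η * L ^ 2 := by linarith
  have h2 : (-(η * L ^ 2 * Lσbar * β * N * ωbar) + Lσbar * μ * N ^ 2 * 2) ≠ 0 := by
    nlinarith [mul_pos (mul_pos hLσ hN) hmul']
  have h3 : (-(η * L ^ 2 * Lσbar * β * μ * N ^ 2 * ωbar * B * 4)
      - η * L ^ 2 * β ^ 2 * W * μ * N ^ 2 * ωbar * B * 4
      + Lσbar * μ ^ 2 * N ^ 3 * B * 8 + β * W * μ ^ 2 * N ^ 3 * B * 8) ≠ 0 := by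
    have h4 : 0 < 4 * μ * N ^ 2 * B * (Lσbar + β * W) * (2 * μ * N - β * ωbar * η * L ^ 2) := by
      positivity
    nlinarith [h4]
  rw [h1, hδ]
  field_simp [h2, h3]
  have hX : μ * N * 2 - η * L ^ 2 * β * ωbar ≠ 0 := by nlinarith
  ring_nf
  field_simp [hX]
  ring
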